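/- Let (A_n)_{n≥1} be a sequence of d×d complex matrices such that P_n ≠ 0 for every n (so in particular every A_n ≠ 0). If the sequence n ↦ A_n/‖A_n‖ does not converge, and there is no nonzero row vector r ∈ ℂ^d that is a left-eigenvector of every subsequential limit of the sequence n ↦ A_n/‖A_n‖, then the sequence n ↦ P_n/‖P_n‖ does not converge. -/

import Mathlib

open Filter Matrix

/-- `‖X‖`: sum of the moduli of the entries of a complex matrix. -/
noncomputable def matEntrySumNorm {d : ℕ} (M : Matrix (Fin d) (Fin d) ℂ) : ℝ :=
  ∑ i, ∑ j, ‖M i j‖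

/-- `P_n = A_1 ⋯ A_n` (ordered product). -/
noncomputable def matProd {d : ℕ} (A : ℕ → Matrix (Fin d) (Fin d) ℂ) (n : ℕ) :
    Matrix (Fin d) (Fin d) ℂ :=
  ((List.range n).map fun i => A (i + 1)).prod

lemma matEntrySumNorm_nonneg {d : ℕ} (M : Matrix (Fin d) (Fin d) ℂ) :
    0 ≤ matEntrySumNorm M :=
  Finset.sum_nonneg fun _ _ => Finset.sum_nonneg fun _ _ => norm_nonneg _

lemma matEntrySumNorm_pos {d : ℕ} {M : Matrix (Fin d) (Fin d) ℂ} (h : M ≠ 0) :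
    0 < matEntrySumNorm M := by
  rcases (matEntrySumNorm_nonneg M).lt_or_eq with h1 | h1
  · exact h1
  · exfalso; apply h
    have h2 := (Finset.sum_eq_zero_iff_of_nonneg
      (fun i _ => Finset.sum_nonneg fun j _ => norm_nonneg _)).mp h1.symm
    ext i j
    have h3 := (Finset.sum_eq_zero_iff_of_nonneg
      (fun j _ => norm_nonneg (M i j))).mp (h2 i (Finset.mem_univ i))
    simpa using h3 j (Finset.mem_univ j)

lemma matEntrySumNorm_continuous {d : ℕ} :
    Continuous (matEntrySumNorm (d := d)) := by
  unfold matEntrySumNorm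
  exact continuous_finset_sum _ fun i _ => continuous_finset_sum _ fun j _ =>
    continuous_norm.comp ((continuous_apply j).comp (continuous_apply i))

lemma matEntrySumNorm_smul {d : ℕ} (r : ℝ) (M : Matrix (Fin d) (Fin d) ℂ) :
    matEntrySumNorm (r • M) = |r| * matEntrySumNorm M := by
  unfold matEntrySumNorm
  simp only [Finset.mul_sum]
  congr 1; ext i; congr 1; ext j
  simp [Matrix.smul_apply, Complex.real_smul, _root_.map_mul]

lemma matProd_succ {d : ℕ} (A : ℕ → Matrix (Fin d) (Fin d) ℂ) (n : ℕ) :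
    matProd A (n + 1) = matProd A n * A (n + 1) := by
  simp [matProd, List.range_succ]

/-- Theorem 3.1: if `A_n/‖A_n‖` diverges and its subsequential limits
have no common left-eigenvector, then `P_n/‖P_n‖` diverges. -/
theorem normalized_product_diverges {d : ℕ}
    (A : ℕ → Matrix (Fin d) (Fin d) ℂ)
    (hP : ∀ n, matProd A n ≠ 0)
    (hdiv : ¬ ∃ T : Matrix (Fin d) (Fin d) ℂ,
      Tendsto (fun n => (matEntrySumNorm (A n))⁻¹ • A n) atTop (nhds T))
    (heig : ¬ ∃ r : Fin d → ℂ, r ≠ 0 ∧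
      ∀ T : Matrix (Fin d) (Fin d) ℂ,
        (∃ φ : ℕ → ℕ, StrictMono φ ∧
          Tendsto (fun k => (matEntrySumNorm (A (φ k)))⁻¹ • A (φ k)) atTop (nhds T)) →
        ∃ lam : ℂ, r ᵥ* T = lam • r) :
    ¬ ∃ Q : Matrix (Fin d) (Fin d) ℂ,
      Tendsto (fun n => (matEntrySumNorm (matProd A n))⁻¹ • matProd A n)
        atTop (nhds Q) := by
  rintro ⟨Q, hQ⟩
  set f : ℕ → Matrix (Fin d) (Fin d) ℂ :=
    fun n => (matEntrySumNorm (matProd A n))⁻¹ • matProd A n with hf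
  have hPpos : ∀ n, 0 < matEntrySumNorm (matProd A n) := fun n => matEntrySumNorm_pos (hP n)
  have hApos : ∀ n, 1 ≤ n → 0 < matEntrySumNorm (A n) := by
    intro n hn
    apply matEntrySumNorm_pos
    intro hA0
    apply hP n
    obtain ⟨m, rfl⟩ : ∃ m, n = m + 1 := ⟨n - 1, by omega⟩
    rw [matProd_succ, hA0, mul_zero]
  have hfnorm : ∀ n, matEntrySumNorm (f n) = 1 := by
    intro n
    rw [hf]
    simp only
    rw [matEntrySumNorm_smul, abs_of_pos (inv_pos.mpr (hPpos n)),
      inv_mul_cancel₀ (hPpos n).ne']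
  have hQnorm : matEntrySumNorm Q = 1 := by
    have h1 : Tendsto (fun n => matEntrySumNorm (f n)) atTop (nhds (matEntrySumNorm Q)) :=
      (matEntrySumNorm_continuous.tendsto Q).comp hQ
    have h2 : Tendsto (fun n : ℕ => (1 : ℝ)) atTop (nhds (matEntrySumNorm Q)) := by
      apply h1.congr; intro n; rw [hfnorm]
    exact tendsto_nhds_unique h2 tendsto_const_nhds
  have hQne : Q ≠ 0 := by
    intro h; rw [h] at hQnorm; simp [matEntrySumNorm] at hQnorm
  obtain ⟨i₀, hi₀⟩ : ∃ i, Q i ≠ 0 := by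
    by_contra h; push_neg at h
    exact hQne (by ext i j; rw [h i]; rfl)
  apply heig
  refine ⟨Q i₀, hi₀, ?_⟩
  rintro T ⟨φ, hφ, hT⟩
  -- the subsequence of products shifted by one tends to Q
  have hφtop : Tendsto (fun k => φ k - 1) atTop atTop := by
    apply tendsto_atTop.mpr
    intro b
    filter_upwards [eventually_ge_atTop (b + 1)] with k hk
    have h : k ≤ φ k := hφ.le_apply
    omega
  have h1 : Tendsto (fun k => f (φ k - 1)) atTop (nhds Q) := hQ.comp hφtop
  set g : ℕ → Matrix (Fin d) (Fin d) ℂ :=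
    fun k => f (φ k - 1) * ((matEntrySumNorm (A (φ k)))⁻¹ • A (φ k)) with hg
  have hmul : Tendsto g atTop (nhds (Q * T)) := h1.mul hT
  have hnorm : Tendsto (fun k => matEntrySumNorm (g k)) atTop
      (nhds (matEntrySumNorm (Q * T))) := (matEntrySumNorm_continuous.tendsto _).comp hmul
  have key : ∀ᶠ k in atTop, (matEntrySumNorm (g k)) • f (φ k) = g k := by
    filter_upwards [eventually_ge_atTop 1] with k hk
    have hφk : 1 ≤ φ k := le_trans hk hφ.le_apply
    obtain ⟨m, hm⟩ : ∃ m, φ k = m + 1 := ⟨φ k - 1, by omega⟩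
    have hm' : φ k - 1 = m := by omega
    set a := matEntrySumNorm (matProd A m) with ha
    set b := matEntrySumNorm (A (φ k)) with hb
    have hapos : 0 < a := hPpos m
    have hbpos : 0 < b := hApos _ hφk
    have hgk : g k = (a * b)⁻¹ • matProd A (φ k) := by
      rw [hg]
      simp only [hm', hf]
      rw [Matrix.smul_mul, Matrix.mul_smul, smul_smul, mul_inv, hm, matProd_succ, ha, hb, hm]
    have hgnorm : matEntrySumNorm (g k) = (a * b)⁻¹ * matEntrySumNorm (matProd A (φ k)) := by
      rw [hgk, matEntrySumNorm_smul, abs_of_pos (inv_pos.mpr (mul_pos hapos hbpos))]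
    rw [hgnorm, hgk, hf]
    simp only
    rw [smul_smul, mul_assoc, mul_inv_cancel₀ (hPpos (φ k)).ne', mul_one]
  have hsmul : Tendsto (fun k => (matEntrySumNorm (g k)) • f (φ k)) atTop
      (nhds ((matEntrySumNorm (Q * T)) • Q)) :=
    hnorm.smul (hQ.comp (hφ.tendsto_atTop))
  have hQT : Q * T = (matEntrySumNorm (Q * T)) • Q :=
    tendsto_nhds_unique (hmul.congr' (key.mono fun k hk => hk.symm)) hsmul
  refine ⟨(matEntrySumNorm (Q * T) : ℂ), ?_⟩
  funext j
  have h2 : (Q * T) i₀ j = matEntrySumNorm (Q * T) • Q i₀ j :=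
    congrFun (congrFun hQT i₀) j
  simp only [Matrix.vecMul, dotProduct, Pi.smul_apply, smul_eq_mul]
  rw [← Matrix.mul_apply, h2, Complex.real_smul]
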